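/- For every integer k ≥ 1 and every integer m, Σ_{i = max(1−2k, 1−2k+m)}^{min(0, m)} χ(−i/(2k−1)) · χ((m−i)/(2k−1)) = 2k · ξ(m/(2k)), where an empty sum is 0. -/
import Mathlib


open Real Finset

/-- `χ(t) = −1` for `t ∈ [0,1/2]` and `χ(t) = 1` for `t ∈ (1/2,1]`. -/
noncomputable def chi (t : ℝ) : ℝ := if t ≤ 1/2 then -1 else 1

/-- `ξ(t) = max(1−3|t|, |t|−1)` for `|t| ≤ 1` and `ξ(t) = 0` for `|t| > 1`. -/
noncomputable def xi (t : ℝ) : ℝ := if |t| ≤ 1 then max (1 - 3*|t|) (|t| - 1) else 0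

private lemma sum_eval (k m : ℤ) (hk : 1 ≤ k) :
    (∑ i ∈ Finset.Icc (max (1 - 2*k) (1 - 2*k + m)) (min 0 m),
        chi ((-i : ℤ) / ((2*k - 1 : ℤ) : ℝ)) * chi (((m - i : ℤ) : ℝ) / ((2*k - 1 : ℤ) : ℝ)))
      = ((((min 0 m + 1 - max (1-2*k) (1-2*k+m)).toNat : ℤ)
        - 2*((min 0 m + 1 - max (1-k) (max (1-2*k) (1-2*k+m))).toNat : ℤ)
        - 2*((min 0 m + 1 - max (m-k+1) (max (1-2*k) (1-2*k+m))).toNat : ℤ)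
        + 4*((min 0 m + 1 - max (max (1-k) (m-k+1)) (max (1-2*k) (1-2*k+m))).toNat : ℤ) : ℤ) : ℝ) := by
  have hn : (0:ℝ) < ((2*k-1 : ℤ) : ℝ) := by exact_mod_cast (by omega : (0:ℤ) < 2*k-1)
  have hchi : ∀ j : ℤ, chi ((j:ℝ) / ((2*k-1:ℤ):ℝ)) = if j < k then (-1:ℝ) else 1 := by
    intro j
    have hiff : (j:ℝ) / ((2*k-1:ℤ):ℝ) ≤ 1/2 ↔ j < k := by
      rw [div_le_iff₀ hn]
      constructor
      · intro h
        by_contra hc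
        push_neg at hc
        have hc' : (k:ℝ) ≤ (j:ℝ) := by exact_mod_cast hc
        push_cast at h
        linarith
      · intro h
        have h'' : (j:ℝ) ≤ (k:ℝ) - 1 := by exact_mod_cast (by omega : (j:ℤ) ≤ k - 1)
        push_cast
        linarith
    rw [chi, if_congr hiff rfl rfl]
  have hcount : ∀ a : ℤ, (∑ i ∈ Finset.Icc (max (1 - 2*k) (1 - 2*k + m)) (min 0 m),
        (if a ≤ i then (1:ℝ) else 0))
      = ((min 0 m + 1 - max a (max (1-2*k) (1-2*k+m))).toNat : ℝ) := by
    intro a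
    rw [Finset.sum_boole]
    have hf : (Finset.Icc (max (1 - 2*k) (1 - 2*k + m)) (min 0 m)).filter (fun i => a ≤ i)
        = Finset.Icc (max a (max (1-2*k) (1-2*k+m))) (min 0 m) := by
      ext x
      simp only [Finset.mem_filter, Finset.mem_Icc]
      omega
    rw [hf, Int.card_Icc]
  have hstep : (∑ i ∈ Finset.Icc (max (1 - 2*k) (1 - 2*k + m)) (min 0 m),
        chi ((-i : ℤ) / ((2*k - 1 : ℤ) : ℝ)) * chi (((m - i : ℤ) : ℝ) / ((2*k - 1 : ℤ) : ℝ)))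
      = (∑ i ∈ Finset.Icc (max (1 - 2*k) (1 - 2*k + m)) (min 0 m), (1:ℝ))
        - 2 * (∑ i ∈ Finset.Icc (max (1 - 2*k) (1 - 2*k + m)) (min 0 m),
            (if 1 - k ≤ i then (1:ℝ) else 0))
        - 2 * (∑ i ∈ Finset.Icc (max (1 - 2*k) (1 - 2*k + m)) (min 0 m),
            (if m - k + 1 ≤ i then (1:ℝ) else 0))
        + 4 * (∑ i ∈ Finset.Icc (max (1 - 2*k) (1 - 2*k + m)) (min 0 m),
            (if max (1-k) (m-k+1) ≤ i then (1:ℝ) else 0)) := by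
    rw [Finset.mul_sum, Finset.mul_sum, Finset.mul_sum, ← Finset.sum_sub_distrib,
      ← Finset.sum_sub_distrib, ← Finset.sum_add_distrib]
    refine Finset.sum_congr rfl fun i _ => ?_
    rw [hchi (-i), hchi (m - i)]
    by_cases h1 : 1 - k ≤ i <;> by_cases h2 : m - k + 1 ≤ i
    · rw [if_pos (by omega : -i < k), if_pos (by omega : m - i < k), if_pos h1, if_pos h2,
        if_pos (by omega : max (1-k) (m-k+1) ≤ i)]
      norm_num
    · rw [if_pos (by omega : -i < k), if_neg (by omega : ¬ (m - i < k)), if_pos h1, if_neg h2,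
        if_neg (by omega : ¬ (max (1-k) (m-k+1) ≤ i))]
      norm_num
    · rw [if_neg (by omega : ¬ (-i < k)), if_pos (by omega : m - i < k), if_neg h1, if_pos h2,
        if_neg (by omega : ¬ (max (1-k) (m-k+1) ≤ i))]
      norm_num
    · rw [if_neg (by omega : ¬ (-i < k)), if_neg (by omega : ¬ (m - i < k)), if_neg h1, if_neg h2,
        if_neg (by omega : ¬ (max (1-k) (m-k+1) ≤ i))]
      norm_num
  rw [hstep, Finset.sum_const, Int.card_Icc, nsmul_eq_mul, mul_one,
    hcount (1-k), hcount (m-k+1), hcount (max (1-k) (m-k+1))]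
  push_cast
  ring

theorem statement6 (k m : ℤ) (hk : 1 ≤ k) :
    (∑ i ∈ Finset.Icc (max (1 - 2*k) (1 - 2*k + m)) (min 0 m),
        chi ((-i : ℤ) / ((2*k - 1 : ℤ) : ℝ)) * chi (((m - i : ℤ) : ℝ) / ((2*k - 1 : ℤ) : ℝ)))
      = 2 * (k : ℝ) * xi ((m : ℝ) / (2 * (k : ℝ))) := by
  rw [sum_eval k m hk]
  have h2k : (0:ℝ) < 2*(k:ℝ) := by
    have : (1:ℝ) ≤ (k:ℝ) := by exact_mod_cast hk
    linarith
  have hk0 : (k:ℝ) ≠ 0 := by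
    intro h; rw [h] at h2k; norm_num at h2k
  have habs : |(m : ℝ) / (2 * (k : ℝ))| = ((m.natAbs : ℤ) : ℝ) / (2 * (k:ℝ)) := by
    rw [abs_div, abs_of_pos h2k, ← Int.cast_abs, Int.abs_eq_natAbs]
  rw [xi, habs]
  have hmul : 2*(k:ℝ) * (((m.natAbs : ℤ):ℝ) / (2*(k:ℝ))) = ((m.natAbs : ℤ):ℝ) := by
    field_simp
  by_cases hle : (m.natAbs : ℤ) ≤ 2*k
  · have hle' : ((m.natAbs : ℤ):ℝ) / (2*(k:ℝ)) ≤ 1 := by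
      rw [div_le_one h2k]
      have : ((m.natAbs : ℤ):ℝ) ≤ ((2*k : ℤ):ℝ) := by exact_mod_cast hle
      push_cast at this ⊢
      linarith
    rw [if_pos hle']
    by_cases hhalf : (m.natAbs : ℤ) ≤ k
    · have ht : ((m.natAbs : ℤ):ℝ) / (2*(k:ℝ)) ≤ 1/2 := by
        rw [div_le_iff₀ h2k]
        have : ((m.natAbs : ℤ):ℝ) ≤ (k:ℝ) := by exact_mod_cast hhalf
        linarith
      rw [show (((min 0 m + 1 - max (1-2*k) (1-2*k+m)).toNat : ℤ)
        - 2*((min 0 m + 1 - max (1-k) (max (1-2*k) (1-2*k+m))).toNat : ℤ)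
        - 2*((min 0 m + 1 - max (m-k+1) (max (1-2*k) (1-2*k+m))).toNat : ℤ)
        + 4*((min 0 m + 1 - max (max (1-k) (m-k+1)) (max (1-2*k) (1-2*k+m))).toNat : ℤ) : ℤ)
        = 2*k - 3*(m.natAbs : ℤ) from by omega]
      push_cast
      push_cast at ht
      rw [max_eq_left (show |(m:ℝ)|/(2*(k:ℝ)) - 1 ≤ 1 - 3*(|(m:ℝ)|/(2*(k:ℝ))) from by linarith)]
      field_simp
    · have ht : 1/2 ≤ ((m.natAbs : ℤ):ℝ) / (2*(k:ℝ)) := by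
        rw [le_div_iff₀ h2k]
        have : (k:ℝ) ≤ ((m.natAbs : ℤ):ℝ) := by exact_mod_cast (le_of_not_ge hhalf)
        linarith
      rw [show (((min 0 m + 1 - max (1-2*k) (1-2*k+m)).toNat : ℤ)
        - 2*((min 0 m + 1 - max (1-k) (max (1-2*k) (1-2*k+m))).toNat : ℤ)
        - 2*((min 0 m + 1 - max (m-k+1) (max (1-2*k) (1-2*k+m))).toNat : ℤ)
        + 4*((min 0 m + 1 - max (max (1-k) (m-k+1)) (max (1-2*k) (1-2*k+m))).toNat : ℤ) : ℤ)
        = (m.natAbs : ℤ) - 2*k from by omega]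
      push_cast
      push_cast at ht
      rw [max_eq_right (show 1 - 3*(|(m:ℝ)|/(2*(k:ℝ))) ≤ |(m:ℝ)|/(2*(k:ℝ)) - 1 from by linarith)]
      field_simp
  · have hle' : ¬ (((m.natAbs : ℤ):ℝ) / (2*(k:ℝ)) ≤ 1) := by
      rw [div_le_one h2k]
      intro hcon
      have : ((m.natAbs : ℤ):ℝ) ≤ ((2*k : ℤ):ℝ) := by push_cast at hcon ⊢; linarith
      exact hle (by exact_mod_cast this)
    rw [if_neg hle', mul_zero]
    rw [show (((min 0 m + 1 - max (1-2*k) (1-2*k+m)).toNat : ℤ)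
        - 2*((min 0 m + 1 - max (1-k) (max (1-2*k) (1-2*k+m))).toNat : ℤ)
        - 2*((min 0 m + 1 - max (m-k+1) (max (1-2*k) (1-2*k+m))).toNat : ℤ)
        + 4*((min 0 m + 1 - max (max (1-k) (m-k+1)) (max (1-2*k) (1-2*k+m))).toNat : ℤ) : ℤ)
        = 0 from by omega]
    norm_num
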